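/- arXiv:2303.10737 — 4 statements merged into one kernel-verified Lean document; each statement's English description precedes it below -/
import Mathlib

section
/- For every n ≥ 1, the map M_n(S^1) → Circle × Q_n sending (z_1,…,z_n) to (z_n, (z_1·z_n⁻¹, …, z_{n−1}·z_n⁻¹, 1)) is a homeomorphism; in particular the configuration space M_n(S^1) splits as a Cartesian product S^1 × Q_n. -/
open scoped Real

noncomputable section

/-- The configuration space `Q_{n+1}` of `n+1` ordered points on the circle,
no three of which coincide, with the last point fixed at `1`. -/
def QSet (n : ℕ) : Set (Fin (n + 1) → Circle) :=
  {z | z (Fin.last n) = 1 ∧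
    ∀ i j k : Fin (n + 1), i ≠ j → i ≠ k → j ≠ k → ¬(z i = z j ∧ z i = z k)}

/-- The basepoint of `Q_{n+1}`: the `j`-th coordinate is `exp (2 π i j / (n+1))` (`1`-based). -/
def q0 (n : ℕ) : Fin (n + 1) → Circle :=
  fun j => Circle.exp (2 * π * (j.val + 1) / (n + 1))

theorem q0_injective (n : ℕ) : Function.Injective (q0 n) := by
  intro i j h
  simp only [q0] at h; rw [Circle.exp_eq_exp] at h
  obtain ⟨m, hm⟩ := h
  have hn : (0:ℝ) < (n:ℝ) + 1 := by positivity
  have hpi : (0:ℝ) < π := Real.pi_pos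
  have h2 : ((i.val : ℝ) + 1) = ((j.val : ℝ) + 1) + m * ((n:ℝ) + 1) := by
    field_simp at hm
    nlinarith [hm]
  have h3 : ((i.val : ℤ) + 1) = ((j.val : ℤ) + 1) + m * ((n:ℤ) + 1) := by
    exact_mod_cast h2
  have hi := i.isLt
  have hj := j.isLt
  have hb : m * ((n:ℤ) + 1) = (i.val : ℤ) - (j.val : ℤ) := by linarith [h3]
  have hi' : (i.val : ℤ) ≤ n := by exact_mod_cast Nat.lt_succ_iff.mp hi
  have hj' : (j.val : ℤ) ≤ n := by exact_mod_cast Nat.lt_succ_iff.mp hj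
  have hi0 : (0:ℤ) ≤ i.val := Int.natCast_nonneg _
  have hj0 : (0:ℤ) ≤ j.val := Int.natCast_nonneg _
  have hm0 : m = 0 := by
    rcases lt_trichotomy m 0 with hm' | hm' | hm'
    · have h1 : m ≤ -1 := by omega
      nlinarith
    · exact hm'
    · have h1 : 1 ≤ m := hm'
      nlinarith
  subst hm0
  simp only [zero_mul] at hb
  have : (i.val : ℤ) = j.val := by omega
  exact Fin.ext (by exact_mod_cast this)

theorem q0_mem (n : ℕ) : q0 n ∈ QSet n := by
  constructor
  · show Circle.exp _ = 1
    have : 2 * π * ((Fin.last n).val + 1) / (n + 1) = 2 * π := by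
      simp [Fin.last]
      field_simp
    rw [this, Circle.exp_two_pi]
  · intro i j k hij _ _ h
    exact hij (q0_injective n h.1)

/-- The basepoint as an element of `Q_{n+1}`. -/
def Qbase (n : ℕ) : QSet n := ⟨q0 n, q0_mem n⟩

/-- The annular configuration space `M_{n+1}(S¹)` of `n+1` ordered points on the circle,
no three of which coincide. -/
def MSet (n : ℕ) : Set (Fin (n + 1) → Circle) :=
  {z | ∀ i j k : Fin (n + 1), i ≠ j → i ≠ k → j ≠ k → ¬(z i = z j ∧ z i = z k)}

theorem QSet_subset_MSet (n : ℕ) : QSet n ⊆ MSet n := fun _ hz => hz.2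

/-- The map `M_{n+1}(S¹) → S¹ × Q_{n+1}` sending `(z₁, …, z_{n+1})` to
`(z_{n+1}, (z₁ · z_{n+1}⁻¹, …, zₙ · z_{n+1}⁻¹, 1))`. -/
def splitMap (n : ℕ) : ↥(MSet n) → Circle × ↥(QSet n) :=
  fun z =>
    (z.1 (Fin.last n),
      ⟨fun j => z.1 j * (z.1 (Fin.last n))⁻¹,
        ⟨mul_inv_cancel _,
          fun i j k hij hik hjk h =>
            z.2 i j k hij hik hjk ⟨mul_right_cancel h.1, mul_right_cancel h.2⟩⟩⟩)

/-- For every `n ≥ 1` (here `Mₙ(S¹) = MSet (n-1)` and `Qₙ = QSet (n-1)`),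
the map `Mₙ(S¹) → S¹ × Qₙ`, `(z₁,…,zₙ) ↦ (zₙ, (z₁·zₙ⁻¹, …, z_{n-1}·zₙ⁻¹, 1))`, is a
homeomorphism; in particular `Mₙ(S¹)` splits as a Cartesian product `S¹ × Qₙ`. -/
theorem isHomeomorph_splitMap (n : ℕ) : IsHomeomorph (splitMap n) := by
  rw [isHomeomorph_iff_exists_inverse]
  refine ⟨?_, fun p => ⟨fun j => p.2.1 j * p.1, ?_⟩, ?_, ?_, ?_⟩
  · refine Continuous.prodMk ?_ (Continuous.subtype_mk ?_ _)
    · exact (continuous_apply (Fin.last n)).comp continuous_subtype_val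
    · exact continuous_pi fun j =>
        (((continuous_apply j).comp continuous_subtype_val).mul
          (((continuous_apply (Fin.last n)).comp continuous_subtype_val).inv))
  · intro i j k hij hik hjk h
    exact p.2.2.2 i j k hij hik hjk ⟨mul_right_cancel h.1, mul_right_cancel h.2⟩
  · intro z
    ext j
    simp [splitMap, mul_assoc]
  · intro p
    have h1 : p.2.1 (Fin.last n) = 1 := p.2.2.1
    refine Prod.ext ?_ ?_
    · simp [splitMap, h1]
    · ext j
      simp [splitMap, h1, mul_assoc]
  · refine Continuous.subtype_mk (continuous_pi fun j => ?_) _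
    exact (((continuous_apply j).comp (continuous_subtype_val.comp continuous_snd)).mul
      continuous_fst)
end
end

section
/- For every n ≥ 3, the assignments σ_i ↦ s_{i,i+1} for 1 ≤ i ≤ n−1 and ζ ↦ s_{1,n}·s_{2,n} respect the defining relations of Υ_n and hence extend to a group homomorphism κ: Υ_n → J_n. -/
/-- Generators of the cactus group `Jₙ`: pairs `(p, q)` of `0`-based indices with `p < q`;
the pair `(p, q)` represents the generator `s_{p+1, q+1}` in `1`-based notation. -/
def CactusGen (n : ℕ) : Type := {pq : Fin n × Fin n // pq.1 < pq.2}

/-- The defining relators of the cactus group `Jₙ` (in `0`-based notation):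
`s_{p,q}² = 1`; `s_{p,q}s_{m,r} = s_{m,r}s_{p,q}` whenever the intervals `[p,q]` and
`[m,r]` are disjoint; and `s_{p,q}s_{m,r} = s_{p+q-r,p+q-m}s_{p,q}` whenever
`p ≤ m < r ≤ q`. -/
def cactusRels (n : ℕ) : Set (FreeGroup (CactusGen n)) :=
  {w | (∃ a : CactusGen n, w = FreeGroup.of a * FreeGroup.of a) ∨
       (∃ a b : CactusGen n, (a.1.2 < b.1.1 ∨ b.1.2 < a.1.1) ∧
          w = FreeGroup.of a * FreeGroup.of b * (FreeGroup.of a)⁻¹ * (FreeGroup.of b)⁻¹) ∨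
       (∃ a b c : CactusGen n, a.1.1 ≤ b.1.1 ∧ b.1.2 ≤ a.1.2 ∧
          (c.1.1 : ℕ) = (a.1.1 : ℕ) + (a.1.2 : ℕ) - (b.1.2 : ℕ) ∧
          (c.1.2 : ℕ) = (a.1.1 : ℕ) + (a.1.2 : ℕ) - (b.1.1 : ℕ) ∧
          w = FreeGroup.of a * FreeGroup.of b * (FreeGroup.of a)⁻¹ * (FreeGroup.of c)⁻¹)}

/-- The cactus group `Jₙ`, presented with generators `s_{p,q}`, `1 ≤ p < q ≤ n`, and
relations `s_{p,q}² = 1`, `s_{p,q}s_{m,r} = s_{m,r}s_{p,q}` for `[p,q] ∩ [m,r] = ∅`, and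
`s_{p,q}s_{m,r} = s_{p+q-r,p+q-m}s_{p,q}` for `p ≤ m < r ≤ q`. -/
def CactusGroup (n : ℕ) : Type := PresentedGroup (cactusRels n)

instance (n : ℕ) : Group (CactusGroup n) := inferInstanceAs (Group (PresentedGroup _))

/-- The generator `s_{p+1,q+1}` of the cactus group `Jₙ`. -/
def cactusGen {n : ℕ} (a : CactusGen n) : CactusGroup n := PresentedGroup.of a

/-- The defining relators of the round twin group `Υₙ`, with generators
`Sum.inl i = σ_{i+1}` (for `i : Fin (n-1)`, `0`-based) and `Sum.inr () = ζ`: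
`σᵢ² = 1`; `σᵢσⱼ = σⱼσᵢ` whenever `|i - j| > 1`; and `σᵢζ = ζσ_{i+1}` for
`1 ≤ i ≤ n - 2`. -/
def twinRels (n : ℕ) : Set (FreeGroup (Fin (n - 1) ⊕ Unit)) :=
  {w | (∃ i : Fin (n - 1), w = FreeGroup.of (.inl i) * FreeGroup.of (.inl i)) ∨
       (∃ i j : Fin (n - 1), ((i : ℕ) + 1 < (j : ℕ) ∨ (j : ℕ) + 1 < (i : ℕ)) ∧
          w = FreeGroup.of (.inl i) * FreeGroup.of (.inl j) *
            (FreeGroup.of (.inl i))⁻¹ * (FreeGroup.of (.inl j))⁻¹) ∨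
       (∃ i j : Fin (n - 1), (j : ℕ) = (i : ℕ) + 1 ∧
          w = FreeGroup.of (.inl i) * FreeGroup.of (.inr ()) *
            (FreeGroup.of (.inl j))⁻¹ * (FreeGroup.of (.inr ()))⁻¹)}

/-- The round twin group `Υₙ`, presented with generators `σ₁, …, σ_{n-1}, ζ` and relations
`σᵢ² = 1`, `σᵢσⱼ = σⱼσᵢ` for `|i - j| > 1`, and `σᵢζ = ζσ_{i+1}` for `1 ≤ i ≤ n - 2`. -/
def RoundTwinGroup (n : ℕ) : Type := PresentedGroup (twinRels n)

instance (n : ℕ) : Group (RoundTwinGroup n) := inferInstanceAs (Group (PresentedGroup _))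

/-- The generator `σ_{i+1}` of the round twin group `Υₙ`. -/
def twinSigma {n : ℕ} (i : Fin (n - 1)) : RoundTwinGroup n := PresentedGroup.of (.inl i)

/-- The generator `ζ` of the round twin group `Υₙ`. -/
def twinZeta {n : ℕ} : RoundTwinGroup n := PresentedGroup.of (.inr ())

-- helper lemmas to insert above the theorem
lemma cactus_rel_one {n : ℕ} {w : FreeGroup (CactusGen n)} (hw : w ∈ cactusRels n) :
    PresentedGroup.mk (cactusRels n) w = 1 := by
  have : w ∈ Subgroup.normalClosure (cactusRels n) := Subgroup.subset_normalClosure hw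
  exact (QuotientGroup.eq_one_iff w).mpr this

lemma cactusGen_sq {n : ℕ} (a : CactusGen n) : cactusGen a * cactusGen a = 1 := by
  have h := cactus_rel_one (n := n) (Or.inl ⟨a, rfl⟩)
  simp only [cactusGen, PresentedGroup.of, map_mul] at h ⊢; exact h

lemma cactusGen_comm {n : ℕ} (a b : CactusGen n) (h : a.1.2 < b.1.1 ∨ b.1.2 < a.1.1) :
    cactusGen a * cactusGen b * (cactusGen a)⁻¹ * (cactusGen b)⁻¹ = 1 := by
  have h := cactus_rel_one (n := n) (Or.inr (Or.inl ⟨a, b, h, rfl⟩))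
  simp only [cactusGen, PresentedGroup.of, map_mul, map_inv] at h ⊢; exact h

lemma cactusGen_conj {n : ℕ} (a b c : CactusGen n) (h1 : a.1.1 ≤ b.1.1) (h2 : b.1.2 ≤ a.1.2)
    (h3 : (c.1.1 : ℕ) = (a.1.1 : ℕ) + (a.1.2 : ℕ) - (b.1.2 : ℕ))
    (h4 : (c.1.2 : ℕ) = (a.1.1 : ℕ) + (a.1.2 : ℕ) - (b.1.1 : ℕ)) :
    cactusGen a * cactusGen b * (cactusGen a)⁻¹ = cactusGen c := by
  have h := cactus_rel_one (n := n) (Or.inr (Or.inr ⟨a, b, c, h1, h2, h3, h4, rfl⟩))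
  have h' : cactusGen a * cactusGen b * (cactusGen a)⁻¹ * (cactusGen c)⁻¹ = 1 := by
    simp only [cactusGen, PresentedGroup.of, map_mul, map_inv] at h ⊢; exact h
  exact mul_inv_eq_one.mp h'

/-- For every `n ≥ 3`, the assignments `σᵢ ↦ s_{i,i+1}` for `1 ≤ i ≤ n-1` and
`ζ ↦ s_{1,n} · s_{2,n}` respect the defining relations of `Υₙ`, and hence extend to a group
homomorphism `κ : Υₙ → Jₙ`. -/
theorem exists_kappa (n : ℕ) (hn : 3 ≤ n) :
    ∃ κ : RoundTwinGroup n →* CactusGroup n,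
      (∀ i : Fin (n - 1),
        κ (twinSigma i) = cactusGen ⟨(⟨(i : ℕ), by have := i.isLt; omega⟩,
          ⟨(i : ℕ) + 1, by have := i.isLt; omega⟩), Fin.mk_lt_mk.mpr (Nat.lt_succ_self _)⟩) ∧
      κ twinZeta =
        cactusGen ⟨(⟨0, by omega⟩, ⟨n - 1, by omega⟩), Fin.mk_lt_mk.mpr (by omega)⟩ *
        cactusGen ⟨(⟨1, by omega⟩, ⟨n - 1, by omega⟩), Fin.mk_lt_mk.mpr (by omega)⟩ := by

  have h3 : 3 ≤ n := hn
  -- generator images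
  let σ : Fin (n - 1) → CactusGroup n := fun i =>
    cactusGen ⟨(⟨(i : ℕ), by have := i.isLt; omega⟩,
      ⟨(i : ℕ) + 1, by have := i.isLt; omega⟩), Fin.mk_lt_mk.mpr (Nat.lt_succ_self _)⟩
  let sg : CactusGen n := ⟨(⟨0, by omega⟩, ⟨n - 1, by omega⟩), Fin.mk_lt_mk.mpr (by omega)⟩
  let tg : CactusGen n := ⟨(⟨1, by omega⟩, ⟨n - 1, by omega⟩), Fin.mk_lt_mk.mpr (by omega)⟩
  let f : Fin (n - 1) ⊕ Unit → CactusGroup n :=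
    Sum.elim σ (fun _ => cactusGen sg * cactusGen tg)
  have hrel : ∀ r ∈ twinRels n, FreeGroup.lift f r = 1 := by
    intro r hr
    rcases hr with ⟨i, rfl⟩ | ⟨i, j, hij, rfl⟩ | ⟨i, j, hij, rfl⟩
    · rw [map_mul, FreeGroup.lift_apply_of]
      exact cactusGen_sq _
    · rw [map_mul, map_mul, map_mul, map_inv, map_inv, FreeGroup.lift_apply_of, FreeGroup.lift_apply_of]
      show σ i * σ j * (σ i)⁻¹ * (σ j)⁻¹ = 1
      refine cactusGen_comm _ _ ?_
      rcases hij with h | h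
      · exact Or.inl (Fin.mk_lt_mk.mpr h)
      · exact Or.inr (Fin.mk_lt_mk.mpr h)
    · rw [map_mul, map_mul, map_mul, map_inv, map_inv, FreeGroup.lift_apply_of, FreeGroup.lift_apply_of,
        FreeGroup.lift_apply_of]
      show σ i * (cactusGen sg * cactusGen tg) * (σ j)⁻¹ * (cactusGen sg * cactusGen tg)⁻¹ = 1
      have hjlt := j.isLt
      have hi2 : (i : ℕ) + 2 ≤ n - 1 := by omega
      let c1 : CactusGen n := ⟨(⟨n - ((i : ℕ) + 2), by omega⟩, ⟨n - ((i : ℕ) + 1), by omega⟩),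
        Fin.mk_lt_mk.mpr (by omega)⟩
      have step1 : cactusGen tg * σ j * (cactusGen tg)⁻¹ = cactusGen c1 := by
        refine cactusGen_conj tg _ c1 ?_ ?_ ?_ ?_
        · exact Fin.mk_le_mk.mpr (by omega)
        · exact Fin.mk_le_mk.mpr (by omega)
        · show n - ((i : ℕ) + 2) = 1 + (n - 1) - ((j : ℕ) + 1); omega
        · show n - ((i : ℕ) + 1) = 1 + (n - 1) - (j : ℕ); omega
      have step2 : cactusGen sg * cactusGen c1 * (cactusGen sg)⁻¹ = σ i := by
        refine cactusGen_conj sg c1 _ ?_ ?_ ?_ ?_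
        · exact Fin.mk_le_mk.mpr (by omega)
        · exact Fin.mk_le_mk.mpr (by omega)
        · show (i : ℕ) = 0 + (n - 1) - (n - ((i : ℕ) + 1)); omega
        · show (i : ℕ) + 1 = 0 + (n - 1) - (n - ((i : ℕ) + 2)); omega
      have key : (cactusGen sg * cactusGen tg) * σ j * (cactusGen sg * cactusGen tg)⁻¹ = σ i := by
        rw [show (cactusGen sg * cactusGen tg) * σ j * (cactusGen sg * cactusGen tg)⁻¹ =
          cactusGen sg * (cactusGen tg * σ j * (cactusGen tg)⁻¹) * (cactusGen sg)⁻¹ by group,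
          step1, step2]
      have key' : (cactusGen sg * cactusGen tg) * (σ j)⁻¹ * (cactusGen sg * cactusGen tg)⁻¹
          = (σ i)⁻¹ := by
        rw [← key]; group
      rw [show σ i * (cactusGen sg * cactusGen tg) * (σ j)⁻¹ * (cactusGen sg * cactusGen tg)⁻¹
        = σ i * ((cactusGen sg * cactusGen tg) * (σ j)⁻¹ * (cactusGen sg * cactusGen tg)⁻¹)
        by group, key', mul_inv_cancel]
  refine ⟨PresentedGroup.toGroup hrel, fun i => ?_, ?_⟩
  · exact PresentedGroup.toGroup.of hrel
  · exact PresentedGroup.toGroup.of hrel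
end

section
/- The group homomorphism κ: Υ_3 → J_3 determined by κ(σ_1) = s_{1,2}, κ(σ_2) = s_{2,3} and κ(ζ) = s_{1,3}·s_{2,3} is not injective. -/
section Aux

private lemma rel_one {α : Type*} {rels : Set (FreeGroup α)} {r : FreeGroup α}
    (hr : r ∈ rels) : PresentedGroup.mk rels r = 1 :=
  (QuotientGroup.eq_one_iff r).mpr (Subgroup.subset_normalClosure hr)

private abbrev X : CactusGroup 3 :=
  cactusGen ⟨(⟨0, by decide⟩, ⟨1, by decide⟩), Fin.mk_lt_mk.mpr (by decide)⟩
private abbrev Y : CactusGroup 3 :=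
  cactusGen ⟨(⟨1, by decide⟩, ⟨2, by decide⟩), Fin.mk_lt_mk.mpr (by decide)⟩
private abbrev Z : CactusGroup 3 :=
  cactusGen ⟨(⟨0, by decide⟩, ⟨2, by decide⟩), Fin.mk_lt_mk.mpr (by decide)⟩

private lemma sq_one (a : CactusGen 3) : cactusGen a * cactusGen a = 1 := by
  have h := rel_one (rels := cactusRels 3)
    (r := FreeGroup.of a * FreeGroup.of a) (Or.inl ⟨a, rfl⟩)
  simp [cactusGen, PresentedGroup.of, map_mul] at h
  exact h

private lemma braid (a b c : CactusGen 3) (h1 : a.1.1 ≤ b.1.1) (h2 : b.1.2 ≤ a.1.2)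
    (h3 : (c.1.1 : ℕ) = (a.1.1 : ℕ) + (a.1.2 : ℕ) - (b.1.2 : ℕ))
    (h4 : (c.1.2 : ℕ) = (a.1.1 : ℕ) + (a.1.2 : ℕ) - (b.1.1 : ℕ)) :
    cactusGen a * cactusGen b = cactusGen c * cactusGen a := by
  have h := rel_one (rels := cactusRels 3)
    (r := FreeGroup.of a * FreeGroup.of b * (FreeGroup.of a)⁻¹ * (FreeGroup.of c)⁻¹)
    (Or.inr (Or.inr ⟨a, b, c, h1, h2, h3, h4, rfl⟩))
  have h' : cactusGen a * cactusGen b * (cactusGen a)⁻¹ * (cactusGen c)⁻¹ = 1 := by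
    simp [cactusGen, PresentedGroup.of, map_mul, map_inv] at h
    exact h
  have h'' : cactusGen a * cactusGen b * (cactusGen a)⁻¹ = cactusGen c :=
    mul_inv_eq_one.mp h'
  rw [← h'']
  group

private lemma keyword : Z * Y * X * (Z * Y * X) * (Y * Z * X) * (Y * Z * X) = 1 := by
  have hXX := sq_one ⟨(⟨0, by omega⟩, ⟨1, by omega⟩), Fin.mk_lt_mk.mpr (by omega)⟩
  have hYY := sq_one ⟨(⟨1, by omega⟩, ⟨2, by omega⟩), Fin.mk_lt_mk.mpr (by omega)⟩
  have hZZ := sq_one ⟨(⟨0, by omega⟩, ⟨2, by omega⟩), Fin.mk_lt_mk.mpr (by omega)⟩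
  have hZY : Z * Y = X * Z := braid _ _ _ (by decide) (by decide) (by decide) (by decide)
  have hZX : Z * X = Y * Z := braid _ _ _ (by decide) (by decide) (by decide) (by decide)
  calc Z * Y * X * (Z * Y * X) * (Y * Z * X) * (Y * Z * X)
      = (X * Z) * X * ((X * Z) * X) * (Y * Z * X) * (Y * Z * X) := by rw [hZY]
    _ = X * (Z * ((X * X) * Z)) * X * (Y * (Z * X)) * (Y * (Z * X)) := by group
    _ = X * (Z * ((1:CactusGroup 3) * Z)) * X * (Y * (Y * Z)) * (Y * (Y * Z)) := by
        rw [hXX, hZX]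
    _ = X * (Z * Z) * X * ((Y * Y) * Z) * ((Y * Y) * Z) := by group
    _ = X * (1:CactusGroup 3) * X * ((1:CactusGroup 3) * Z) * ((1:CactusGroup 3) * Z) := by
        rw [hZZ, hYY]
    _ = (X * X) * (Z * Z) := by group
    _ = 1 := by rw [hXX, hZZ, one_mul]

private def fS4 : Fin 2 ⊕ Unit → Equiv.Perm (Fin 4)
  | .inl ⟨0, _⟩ => Equiv.swap 0 1
  | .inl ⟨1, _⟩ => (finRotate 4)⁻¹ * Equiv.swap 0 1 * finRotate 4
  | .inr () => finRotate 4

private lemma fS4_rels : ∀ r ∈ twinRels 3, FreeGroup.lift fS4 r = 1 := by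
  rintro r (⟨i, rfl⟩ | ⟨i, j, hij, rfl⟩ | ⟨i, j, hij, rfl⟩)
  · fin_cases i <;> simp only [map_mul, FreeGroup.lift_apply_of] <;> decide
  · exact absurd hij (by omega)
  · have hi0 : (i : ℕ) = 0 := by omega
    have hj1 : (j : ℕ) = 1 := by omega
    obtain ⟨iv, hlti⟩ := i
    obtain ⟨jv, hltj⟩ := j
    simp only [Fin.val_mk] at hi0 hj1
    subst hi0 hj1
    simp only [map_mul, map_inv, FreeGroup.lift_apply_of]
    show Equiv.swap 0 1 * finRotate 4 *
      ((finRotate 4)⁻¹ * Equiv.swap 0 1 * finRotate 4)⁻¹ * (finRotate 4)⁻¹ = 1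
    decide

end Aux

/-- The group homomorphism `κ : Υ₃ → J₃` determined by `κ(σ₁) = s_{1,2}`,
`κ(σ₂) = s_{2,3}` and `κ(ζ) = s_{1,3} · s_{2,3}` is not injective. (In `0`-based notation,
`s_{1,2} = (0,1)`, `s_{2,3} = (1,2)` and `s_{1,3} = (0,2)`.) -/
theorem kappa_three_not_injective
    (κ : RoundTwinGroup 3 →* CactusGroup 3)
    (hσ : ∀ i : Fin 2,
      κ (twinSigma (n := 3) i) = cactusGen ⟨(⟨(i : ℕ), by have := i.isLt; omega⟩,
        ⟨(i : ℕ) + 1, by have := i.isLt; omega⟩), Fin.mk_lt_mk.mpr (Nat.lt_succ_self _)⟩)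
    (hζ : κ (twinZeta (n := 3)) =
      cactusGen ⟨(⟨0, by omega⟩, ⟨2, by omega⟩), Fin.mk_lt_mk.mpr (by omega)⟩ *
      cactusGen ⟨(⟨1, by omega⟩, ⟨2, by omega⟩), Fin.mk_lt_mk.mpr (by omega)⟩) :
    ¬ Function.Injective κ := by
  
  intro hinj
  set σ : RoundTwinGroup 3 := twinSigma (n := 3) ⟨0, by omega⟩ with hσdef
  set ζ : RoundTwinGroup 3 := twinZeta (n := 3) with hζdef
  set g : RoundTwinGroup 3 := ζ * σ * (ζ * σ) * (ζ⁻¹ * σ) * (ζ⁻¹ * σ) with hgdef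
  have hκσ : κ σ = X := hσ ⟨0, by omega⟩
  have hκζ : κ ζ = Z * Y := hζ
  have hZYinv : (Z * Y)⁻¹ = Y * Z := by
    refine inv_eq_of_mul_eq_one_right ?_
    have hYY := sq_one ⟨(⟨1, by omega⟩, ⟨2, by omega⟩), Fin.mk_lt_mk.mpr (by omega)⟩
    have hZZ := sq_one ⟨(⟨0, by omega⟩, ⟨2, by omega⟩), Fin.mk_lt_mk.mpr (by omega)⟩
    calc Z * Y * (Y * Z) = Z * (Y * Y) * Z := by group
      _ = Z * (1:CactusGroup 3) * Z := by rw [hYY]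
      _ = 1 := by rw [mul_one, hZZ]
  have hκg : κ g = 1 := by
    rw [hgdef]
    simp only [map_mul, map_inv, hκσ, hκζ, hZYinv]
    exact keyword
  have hg1 : g = 1 := hinj (by rw [hκg, map_one])
  have hφg : PresentedGroup.toGroup fS4_rels g = 1 := by rw [hg1]; exact map_one (PresentedGroup.toGroup fS4_rels)
  have hφσ : PresentedGroup.toGroup fS4_rels σ = Equiv.swap 0 1 := by
    rw [hσdef]
    exact PresentedGroup.toGroup.of fS4_rels
  have hφζ : PresentedGroup.toGroup fS4_rels ζ = finRotate 4 := by
    rw [hζdef]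
    exact PresentedGroup.toGroup.of fS4_rels
  rw [hgdef] at hφg
  have key : ∀ a b : PresentedGroup (twinRels 3), PresentedGroup.toGroup fS4_rels a = Equiv.swap 0 1 →
      PresentedGroup.toGroup fS4_rels b = finRotate 4 →
      PresentedGroup.toGroup fS4_rels (b * a * (b * a) * (b⁻¹ * a) * (b⁻¹ * a)) ≠ 1 := by
    intro a b ha hb
    simp only [map_mul, map_inv, ha, hb]
    decide
  exact key σ ζ hφσ hφζ hφg
end

section
/- For every n ≥ 2 there is a surjective group homomorphism J_n → S_n sending each generator s_{p,q} to the permutation τ_{p,q} of {1,…,n} that reverses the order of p, p+1, …, q (i.e. maps i to p+q−i for p ≤ i ≤ q) and fixes all other elements; in particular the assignments s_{p,q} ↦ τ_{p,q} respect the defining relations of J_n. -/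
def tauFun {n : ℕ} (a : CactusGen n) (i : Fin n) : Fin n :=
  if _h : (a.1.1 : ℕ) ≤ (i : ℕ) ∧ (i : ℕ) ≤ (a.1.2 : ℕ) then
    ⟨(a.1.1 : ℕ) + (a.1.2 : ℕ) - (i : ℕ), by have := a.1.2.isLt; omega⟩
  else i

lemma tauFun_val {n : ℕ} (a : CactusGen n) (i : Fin n) :
    ((tauFun a i : Fin n) : ℕ) =
      if (a.1.1 : ℕ) ≤ (i : ℕ) ∧ (i : ℕ) ≤ (a.1.2 : ℕ)
      then (a.1.1 : ℕ) + (a.1.2 : ℕ) - (i : ℕ) else (i : ℕ) := by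
  rw [tauFun]; split <;> rfl

lemma tauFun_invol {n : ℕ} (a : CactusGen n) : Function.Involutive (tauFun a) := by
  intro i
  apply Fin.val_injective
  rw [tauFun_val, tauFun_val]
  split_ifs <;> omega

def tauPerm {n : ℕ} (a : CactusGen n) : Equiv.Perm (Fin n) :=
  (tauFun_invol a).toPerm

lemma tauPerm_val {n : ℕ} (a : CactusGen n) (i : Fin n) :
    ((tauPerm a i : Fin n) : ℕ) =
      if (a.1.1 : ℕ) ≤ (i : ℕ) ∧ (i : ℕ) ≤ (a.1.2 : ℕ)
      then (a.1.1 : ℕ) + (a.1.2 : ℕ) - (i : ℕ) else (i : ℕ) :=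
  tauFun_val a i

lemma tauPerm_sq {n : ℕ} (a : CactusGen n) : tauPerm a * tauPerm a = 1 := by
  ext i
  simp only [Equiv.Perm.mul_apply, Equiv.Perm.one_apply]
  exact congrArg Fin.val (tauFun_invol a i)

lemma tauPerm_comm {n : ℕ} (a b : CactusGen n)
    (h : a.1.2 < b.1.1 ∨ b.1.2 < a.1.1) :
    tauPerm a * tauPerm b = tauPerm b * tauPerm a := by
  have h' : (a.1.2 : ℕ) < (b.1.1 : ℕ) ∨ (b.1.2 : ℕ) < (a.1.1 : ℕ) := h
  ext i
  simp only [Equiv.Perm.mul_apply, tauPerm_val]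
  split_ifs <;> omega

lemma tauPerm_conj {n : ℕ} (a b c : CactusGen n)
    (h1 : a.1.1 ≤ b.1.1) (h2 : b.1.2 ≤ a.1.2)
    (h3 : (c.1.1 : ℕ) = (a.1.1 : ℕ) + (a.1.2 : ℕ) - (b.1.2 : ℕ))
    (h4 : (c.1.2 : ℕ) = (a.1.1 : ℕ) + (a.1.2 : ℕ) - (b.1.1 : ℕ)) :
    tauPerm a * tauPerm b = tauPerm c * tauPerm a := by
  have h1' : (a.1.1 : ℕ) ≤ (b.1.1 : ℕ) := h1
  have h2' : (b.1.2 : ℕ) ≤ (a.1.2 : ℕ) := h2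
  have hb : (b.1.1 : ℕ) < (b.1.2 : ℕ) := b.2
  ext i
  simp only [Equiv.Perm.mul_apply, tauPerm_val]
  split_ifs <;> omega

lemma cactus_rels_lift {n : ℕ} :
    ∀ r ∈ cactusRels n, FreeGroup.lift (tauPerm (n := n)) r = 1 := by
  rintro r (⟨a, rfl⟩ | ⟨a, b, h, rfl⟩ | ⟨a, b, c, h1, h2, h3, h4, rfl⟩)
  · simp only [map_mul, FreeGroup.lift_apply_of]
    exact tauPerm_sq a
  · simp only [map_mul, map_inv, FreeGroup.lift_apply_of]
    rw [tauPerm_comm a b h]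
    group
  · simp only [map_mul, map_inv, FreeGroup.lift_apply_of]
    have := tauPerm_conj a b c h1 h2 h3 h4
    rw [show tauPerm a * tauPerm b * (tauPerm a)⁻¹ * (tauPerm c)⁻¹
        = (tauPerm a * tauPerm b) * ((tauPerm a)⁻¹ * (tauPerm c)⁻¹) by group,
      this]
    group

def cactusPi (n : ℕ) : CactusGroup n →* Equiv.Perm (Fin n) :=
  PresentedGroup.toGroup cactus_rels_lift

lemma cactusPi_of {n : ℕ} (a : CactusGen n) :
    cactusPi n (cactusGen a) = tauPerm a :=
  PresentedGroup.toGroup.of cactus_rels_lift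

lemma swap_mem_range {n : ℕ} (i j : Fin n) (hij : i < j) :
    Equiv.swap i j ∈ (cactusPi n).range := by
  have hij' : (i : ℕ) < (j : ℕ) := hij
  by_cases hsmall : (j : ℕ) ≤ (i : ℕ) + 2
  · refine ⟨cactusGen ⟨(i, j), hij⟩, ?_⟩
    refine (cactusPi_of _).trans ?_
    ext k
    rcases eq_or_ne k i with rfl | hki
    · have : Equiv.swap k j k = j := Equiv.swap_apply_left k j
      erw [this, tauPerm_val]
      simp only
      split_ifs <;> omega
    · rcases eq_or_ne k j with rfl | hkj
      · have : Equiv.swap i k k = i := Equiv.swap_apply_right i k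
        erw [this, tauPerm_val]
        simp only
        split_ifs <;> omega
      · erw [Equiv.swap_apply_of_ne_of_ne hki hkj, tauPerm_val]
        have hki' : (k : ℕ) ≠ (i : ℕ) := fun h => hki (Fin.val_injective h)
        have hkj' : (k : ℕ) ≠ (j : ℕ) := fun h => hkj (Fin.val_injective h)
        simp only
        split_ifs <;> omega
  · push_neg at hsmall
    have hjn := j.isLt
    set a : CactusGen n := ⟨(i, j), hij⟩ with ha
    set b : CactusGen n := ⟨(⟨(i : ℕ) + 1, by omega⟩, ⟨(j : ℕ) - 1, by omega⟩),
      by simp only [Fin.mk_lt_mk]; omega⟩ with hb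
    refine ⟨cactusGen a * cactusGen b, ?_⟩
    rw [map_mul, cactusPi_of, cactusPi_of]
    ext k
    simp only [Equiv.Perm.mul_apply]
    rcases eq_or_ne k i with rfl | hki
    · have : Equiv.swap k j k = j := Equiv.swap_apply_left k j
      rw [this]
      simp only [tauPerm_val]; simp only [ha, hb]
      split_ifs <;> omega
    · rcases eq_or_ne k j with rfl | hkj
      · have : Equiv.swap i k k = i := Equiv.swap_apply_right i k
        rw [this]
        simp only [tauPerm_val]; simp only [ha, hb]
        split_ifs <;> omega
      · rw [Equiv.swap_apply_of_ne_of_ne hki hkj]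
        have hki' : (k : ℕ) ≠ (i : ℕ) := fun h => hki (Fin.val_injective h)
        have hkj' : (k : ℕ) ≠ (j : ℕ) := fun h => hkj (Fin.val_injective h)
        simp only [tauPerm_val]; simp only [ha, hb]
        split_ifs <;> omega

lemma cactusPi_surj (n : ℕ) : Function.Surjective (cactusPi n) := by
  rw [← MonoidHom.range_eq_top]
  rw [eq_top_iff, ← Equiv.Perm.closure_isSwap]
  rw [Subgroup.closure_le]
  rintro σ ⟨x, y, hxy, rfl⟩
  rcases lt_or_gt_of_ne hxy with h | h
  · exact swap_mem_range x y h
  · rw [Equiv.swap_comm]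
    exact swap_mem_range y x h

/-- For every `n ≥ 2` there is a surjective group homomorphism `Jₙ → Sₙ`
sending each generator `s_{p,q}` to the permutation `τ_{p,q}` that reverses the order of
`p, p+1, …, q` (mapping `i` to `p + q - i` for `p ≤ i ≤ q`) and fixes all other elements;
in particular the assignments `s_{p,q} ↦ τ_{p,q}` respect the defining relations of `Jₙ`.
(Indices are `0`-based: the generator `a = ((p,q), _)` is `s_{p+1,q+1}`.) -/
theorem exists_cactus_to_symmetric (n : ℕ) (hn : 2 ≤ n) :
    ∃ π : CactusGroup n →* Equiv.Perm (Fin n),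
      Function.Surjective π ∧
      ∀ (a : CactusGen n) (i : Fin n),
        ((π (cactusGen a)) i : ℕ) =
          if (a.1.1 : ℕ) ≤ (i : ℕ) ∧ (i : ℕ) ≤ (a.1.2 : ℕ)
          then (a.1.1 : ℕ) + (a.1.2 : ℕ) - (i : ℕ)
          else (i : ℕ) := by
  refine ⟨cactusPi n, cactusPi_surj n, fun a i => ?_⟩
  rw [cactusPi_of]
  exact tauPerm_val a i
end
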